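/- Let y_1, …, y_{N−1} solve the periodic semi-discrete FtL system, and let K ≥ 1. If 1 ≤ y_j(0) ≤ K for all j = 1,…,N−1, then 1 ≤ y_j(t) ≤ K for all j = 1,…,N−1 and all t ≥ 0. -/

import Mathlib

open Set Filter Topology

/-- If whenever `j` is a maximizer of the family at `x` its derivative is `≤ 0`,
then the max of the family is nonincreasing. -/
theorem max_nonincreasing {s : Finset ℕ} (hs : s.Nonempty) {g : ℕ → ℝ → ℝ} {d : ℕ → ℝ → ℝ}
    {b : ℝ}
    (hderiv : ∀ j ∈ s, ∀ x ∈ Ici (0:ℝ), HasDerivWithinAt (g j) (d j x) (Ici (0:ℝ)) x)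
    (hmax : ∀ x ∈ Ico (0:ℝ) b, ∀ j ∈ s, (∀ i ∈ s, g i x ≤ g j x) → d j x ≤ 0)
    (ht : b ∈ Icc (0:ℝ) b) :
    s.sup' hs (fun j => g j b) ≤ s.sup' hs (fun j => g j 0) := by
  set F : ℝ → ℝ := fun x => s.sup' hs (fun j => g j x) with hF
  have hgc : ∀ j ∈ s, ContinuousOn (g j) (Ici (0:ℝ)) := fun j hj x hx =>
    (hderiv j hj x hx).continuousWithinAt
  have hFc : ContinuousOn F (Icc (0:ℝ) b) := by
    apply ContinuousOn.mono _ (Icc_subset_Ici_self)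
    exact ContinuousOn.finset_sup'_apply hs (fun j hj => hgc j hj)
  have key : ∀ x ∈ Icc (0:ℝ) b, F x ≤ (fun _ => F 0 : ℝ → ℝ) x := by
    refine image_le_of_liminf_slope_right_le_deriv_boundary (f := F) (B := fun _ => F 0) (B' := fun _ => (0:ℝ)) hFc le_rfl
      continuousOn_const (fun x _ => hasDerivWithinAt_const x _ _) ?_
    intro x hx r hr
    -- find j ∈ s that attains the max frequently near x (from the right)
    have hne : (𝓝[>] x).NeBot := nhdsGT_neBot x
    have hfreq : ∃ j ∈ s, ∃ᶠ z in 𝓝[>] x, F z = g j z := by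
      by_contra h
      push_neg at h
      have hall : ∀ᶠ z in 𝓝[>] x, ∀ j ∈ s, F z ≠ g j z := by
        rw [Finset.eventually_all]
        intro j hj
        simpa using (h j hj)
      rcases hall.exists with ⟨z, hz⟩
      obtain ⟨j, hj, hje⟩ := Finset.exists_mem_eq_sup' hs (fun j => g j z)
      exact hz j hj hje
    obtain ⟨j, hj, hjf⟩ := hfreq
    have hxI : x ∈ Ici (0:ℝ) := hx.1
    have hsub : 𝓝[>] x ≤ 𝓝[Ici (0:ℝ)] x :=
      nhdsWithin_mono x (fun z hz => le_trans hx.1 (le_of_lt hz))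
    -- F x = g j x
    have hFt : Tendsto F (𝓝[>] x) (𝓝 (F x)) :=
      ((ContinuousOn.finset_sup'_apply hs (fun j hj => hgc j hj)) x hxI).tendsto.mono_left hsub
    have hgt : Tendsto (g j) (𝓝[>] x) (𝓝 (g j x)) :=
      ((hgc j hj) x hxI).tendsto.mono_left hsub
    have hFeq : F x = g j x := tendsto_nhds_unique_of_frequently_eq hFt hgt hjf
    -- j is a maximizer at x, so d j x ≤ 0
    have hmaxj : ∀ i ∈ s, g i x ≤ g j x := fun i hi => hFeq ▸ Finset.le_sup' (fun j => g j x) hi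
    have hd0 : d j x ≤ 0 := hmax x hx j hj hmaxj
    -- slope of g j tends to d j x from the right
    have hdx : HasDerivWithinAt (g j) (d j x) (Ici x) x :=
      (hderiv j hj x hxI).mono (fun z hz => le_trans hx.1 hz)
    have hslope : Tendsto (slope (g j) x) (𝓝[>] x) (𝓝 (d j x)) := by
      have := hasDerivWithinAt_iff_tendsto_slope.1 hdx
      refine this.mono_left (nhdsWithin_mono x ?_)
      intro z hz
      exact ⟨mem_Ici.2 (le_of_lt hz), ne_of_gt hz⟩
    have hev : ∀ᶠ z in 𝓝[>] x, slope (g j) x z < r :=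
      hslope.eventually_lt_const (lt_of_le_of_lt hd0 hr)
    refine (hjf.and_eventually hev).mono ?_
    rintro z ⟨hz1, hz2⟩
    have : slope F x z = slope (g j) x z := by
      simp only [slope_def_field, hz1, hFeq]
    rw [this]
    exact hz2
  exact key b ht

/-- `y j`, `j = 1, …, N-1`, solves the periodic semi-discrete Follow-the-Leader
system `ẏ_j(t) = (1/ℓ)(V(y_{j+1}(t)) − V(y_j(t)))` on `[0, ∞)`, with the
periodic convention `y_N := y_1`. -/
def IsFtLSolution (N : ℕ) (ℓ : ℝ) (V : ℝ → ℝ) (y : ℕ → ℝ → ℝ) : Prop :=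
  (∀ t : ℝ, y N t = y 1 t) ∧
  ∀ j ∈ Finset.Icc 1 (N - 1), ∀ t ∈ Set.Ici (0 : ℝ),
    HasDerivWithinAt (y j) (1 / ℓ * (V (y (j + 1) t) - V (y j t))) (Set.Ici (0 : ℝ)) t

/-- If `1 ≤ y_j(0) ≤ K` for all `j = 1,…,N−1`, then `1 ≤ y_j(t) ≤ K` for all
`j` and all `t ≥ 0`, for a solution of the periodic semi-discrete FtL system. -/
theorem ftl_invariant_region
    (N : ℕ) (hN : 2 ≤ N) (ℓ : ℝ) (hℓ : 0 < ℓ)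
    (V : ℝ → ℝ) (LV : NNReal) (hVlip : LipschitzWith LV V) (hVmono : Monotone V)
    (y : ℕ → ℝ → ℝ) (hy : IsFtLSolution N ℓ V y)
    (K : ℝ) (hK : 1 ≤ K)
    (h0 : ∀ j ∈ Finset.Icc 1 (N - 1), 1 ≤ y j 0 ∧ y j 0 ≤ K) :
    ∀ j ∈ Finset.Icc 1 (N - 1), ∀ t : ℝ, 0 ≤ t → 1 ≤ y j t ∧ y j t ≤ K := by
  obtain ⟨hper, hode⟩ := hy
  set s := Finset.Icc 1 (N - 1) with hs_def
  have hs : s.Nonempty := by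
    refine ⟨1, ?_⟩
    simp [hs_def, Finset.mem_Icc]
    omega
  have hℓ' : (0:ℝ) < 1 / ℓ := by positivity
  -- the "next" value is among the family's values
  have hnext : ∀ j ∈ s, ∀ x : ℝ, ∃ i ∈ s, y (j + 1) x = y i x := by
    intro j hj x
    rw [hs_def, Finset.mem_Icc] at hj
    by_cases hjN : j + 1 ≤ N - 1
    · exact ⟨j + 1, by rw [hs_def, Finset.mem_Icc]; omega, rfl⟩
    · have : j = N - 1 := by omega
      have hj1 : j + 1 = N := by omega
      refine ⟨1, by rw [hs_def, Finset.mem_Icc]; omega, ?_⟩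
      rw [hj1, hper]
  intro j hj t ht
  constructor
  · -- lower bound via the max of `-y`
    have h1 : s.sup' hs (fun i => -(y i t)) ≤ s.sup' hs (fun i => -(y i 0)) := by
      refine max_nonincreasing hs (g := fun i x => -(y i x))
        (d := fun i x => -(1 / ℓ * (V (y (i + 1) x) - V (y i x)))) ?_ ?_ ⟨ht, le_rfl⟩
      · intro i hi x hx
        exact (hode i hi x hx).neg
      · intro x hx i hi hmaxi
        have hmin : ∀ k ∈ s, y i x ≤ y k x := fun k hk =>
          neg_le_neg_iff.1 (hmaxi k hk)
        obtain ⟨k, hk, hke⟩ := hnext i hi x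
        have hle : y i x ≤ y (i + 1) x := hke ▸ hmin k hk
        have : 0 ≤ 1 / ℓ * (V (y (i + 1) x) - V (y i x)) :=
          mul_nonneg hℓ'.le (sub_nonneg.2 (hVmono hle))
        linarith
    have h2 : s.sup' hs (fun i => -(y i 0)) ≤ -1 :=
      Finset.sup'_le hs _ fun i hi => neg_le_neg (h0 i hi).1
    have h3 : -(y j t) ≤ s.sup' hs (fun i => -(y i t)) :=
      Finset.le_sup' (fun i => -(y i t)) hj
    linarith
  · -- upper bound via the max of `y`
    have h1 : s.sup' hs (fun i => y i t) ≤ s.sup' hs (fun i => y i 0) := by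
      refine max_nonincreasing hs
        (d := fun i x => 1 / ℓ * (V (y (i + 1) x) - V (y i x)))
        (fun i hi x hx => hode i hi x hx) ?_ ⟨ht, le_rfl⟩
      intro x hx i hi hmaxi
      obtain ⟨k, hk, hke⟩ := hnext i hi x
      have hle : y (i + 1) x ≤ y i x := hke ▸ hmaxi k hk
      exact mul_nonpos_of_nonneg_of_nonpos hℓ'.le (sub_nonpos.2 (hVmono hle))
    have h2 : s.sup' hs (fun i => y i 0) ≤ K :=
      Finset.sup'_le hs _ fun i hi => (h0 i hi).2
    have h3 : y j t ≤ s.sup' hs (fun i => y i t) := Finset.le_sup' (fun i => y i t) hj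
    linarith
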